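/- Let ψ ∈ Ω. Then the following two conditions are equivalent: (i) for every ε > 0 there exists C > 0 such that ψ(st) ≤ C·s^ε·ψ(t) for all t > 0 and all s > 1; (ii) for every ε > 0 there exists a > 1 such that ψ(at) ≤ a^ε·ψ(t) for all t > 0. -/
import Mathlib


open Filter Set Topology

/-- For `ψ ∈ Ω`, the following are equivalent:
(i) for every `ε > 0` there is `C > 0` with `ψ(st) ≤ C s^ε ψ(t)` for all `t > 0`, `s > 1`;
(ii) for every `ε > 0` there is `a > 1` with `ψ(at) ≤ a^ε ψ(t)` for all `t > 0`. -/
theorem stmt6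
    (ψ : ℝ → ℝ)
    (hmono : MonotoneOn ψ (Set.Ici 0))
    (hconc : ConcaveOn ℝ (Set.Ici 0) ψ)
    (hzero : ψ 0 = 0)
    (hnonneg : ∀ t ≥ (0:ℝ), 0 ≤ ψ t)
    (htop : Tendsto ψ atTop atTop) :
    (∀ ε > (0:ℝ), ∃ C > (0:ℝ), ∀ t > (0:ℝ), ∀ s > (1:ℝ), ψ (s * t) ≤ C * s ^ ε * ψ t) ↔
    (∀ ε > (0:ℝ), ∃ a > (1:ℝ), ∀ t > (0:ℝ), ψ (a * t) ≤ a ^ ε * ψ t) := by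
  constructor
  · -- (i) → (ii)
    intro h ε hε
    obtain ⟨C, hC, hh⟩ := h (ε/2) (by positivity)
    set a : ℝ := max 2 (C ^ (2/ε)) with ha
    have ha1 : a > 1 := lt_of_lt_of_le one_lt_two (le_max_left _ _)
    have ha0 : (0:ℝ) < a := by linarith
    refine ⟨a, ha1, fun t ht => ?_⟩
    have h1 : ψ (a * t) ≤ C * a ^ (ε/2) * ψ t := hh t ht a ha1
    have hCa : C ≤ a ^ (ε/2) := by
      have h2 : C ^ (2/ε) ≤ a := le_max_right _ _
      have h3 : (C ^ (2/ε)) ^ (ε/2) ≤ a ^ (ε/2) :=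
        Real.rpow_le_rpow (by positivity) h2 (by positivity)
      calc C = C ^ ((2/ε) * (ε/2)) := by
              rw [show (2/ε) * (ε/2) = 1 by field_simp, Real.rpow_one]
        _ = (C ^ (2/ε)) ^ (ε/2) := Real.rpow_mul hC.le _ _
        _ ≤ a ^ (ε/2) := h3
    have hψ : 0 ≤ ψ t := hnonneg t ht.le
    have h2 : C * a ^ (ε/2) * ψ t ≤ a ^ (ε/2) * a ^ (ε/2) * ψ t := by
      have : C * a ^ (ε/2) ≤ a ^ (ε/2) * a ^ (ε/2) :=
        mul_le_mul_of_nonneg_right hCa (by positivity)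
      exact mul_le_mul_of_nonneg_right this hψ
    have h3 : a ^ (ε/2) * a ^ (ε/2) = a ^ ε := by
      rw [← Real.rpow_add ha0]; ring_nf
    rw [h3] at h2
    linarith [h1, h2]
  · -- (ii) → (i)
    intro h ε hε
    obtain ⟨a, ha1, hh⟩ := h ε hε
    have ha0 : (0:ℝ) < a := by linarith
    have haε : (0:ℝ) < a ^ ε := Real.rpow_pos_of_pos ha0 ε
    refine ⟨a ^ ε, haε, fun t ht s hs => ?_⟩
    -- iterate
    have hiter : ∀ n : ℕ, ∀ t > (0:ℝ), ψ (a ^ (n:ℝ) * t) ≤ a ^ (ε * n) * ψ t := by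
      intro n
      induction n with
      | zero => intro t ht; simp
      | succ n ih =>
        intro t ht
        have hant : (0:ℝ) < a ^ (n:ℝ) * t := by positivity
        have h1 : ψ (a * (a ^ (n:ℝ) * t)) ≤ a ^ ε * ψ (a ^ (n:ℝ) * t) := hh _ hant
        have h2 : ψ (a ^ (n:ℝ) * t) ≤ a ^ (ε * n) * ψ t := ih t ht
        have heq : a ^ ((n:ℝ) + 1) * t = a * (a ^ (n:ℝ) * t) := by
          rw [Real.rpow_add ha0, Real.rpow_one]; ring
        have : ψ (a ^ ((n:ℝ)+1) * t) ≤ a ^ ε * (a ^ (ε * n) * ψ t) := by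
          rw [heq]
          exact h1.trans (mul_le_mul_of_nonneg_left h2 haε.le)
        calc ψ (a ^ (((n+1:ℕ)):ℝ) * t) = ψ (a ^ ((n:ℝ)+1) * t) := by push_cast; ring_nf
          _ ≤ a ^ ε * (a ^ (ε * n) * ψ t) := this
          _ = a ^ (ε * ((n+1:ℕ):ℝ)) * ψ t := by
              rw [← mul_assoc, ← Real.rpow_add ha0]; push_cast; ring_nf
    set n : ℕ := ⌈Real.logb a s⌉₊ with hn
    have hs0 : (0:ℝ) < s := by linarith
    have hlogpos : 0 ≤ Real.logb a s := Real.logb_nonneg ha1 hs.le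
    have hle : s ≤ a ^ (n:ℝ) := by
      calc s = a ^ Real.logb a s := (Real.rpow_logb ha0 (by linarith) hs0).symm
        _ ≤ a ^ (n:ℝ) := Real.rpow_le_rpow_of_exponent_le ha1.le (Nat.le_ceil _)
    have hnle : (n:ℝ) ≤ Real.logb a s + 1 := (Nat.ceil_lt_add_one hlogpos).le
    have hψ : 0 ≤ ψ t := hnonneg t ht.le
    have hstep1 : ψ (s * t) ≤ ψ (a ^ (n:ℝ) * t) := by
      apply hmono (Set.mem_Ici.mpr (by positivity)) (Set.mem_Ici.mpr (by positivity))
      exact mul_le_mul_of_nonneg_right hle ht.le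
    have hstep2 := hiter n t ht
    have hstep3 : a ^ (ε * n) ≤ a ^ ε * s ^ ε := by
      have : a ^ (ε * n) ≤ a ^ (ε * (Real.logb a s + 1)) :=
        Real.rpow_le_rpow_of_exponent_le ha1.le
          (mul_le_mul_of_nonneg_left hnle hε.le)
      calc a ^ (ε * n) ≤ a ^ (ε * (Real.logb a s + 1)) := this
        _ = a ^ ε * (a ^ Real.logb a s) ^ ε := by
            rw [show ε * (Real.logb a s + 1) = ε + Real.logb a s * ε by ring,
              Real.rpow_add ha0, Real.rpow_mul ha0.le]
        _ = a ^ ε * s ^ ε := by rw [Real.rpow_logb ha0 (by linarith) hs0]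
    calc ψ (s * t) ≤ a ^ (ε * n) * ψ t := hstep1.trans hstep2
      _ ≤ a ^ ε * s ^ ε * ψ t := mul_le_mul_of_nonneg_right hstep3 hψ
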